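/- Let Δ_1, …, Δ_r and ∇_1, …, ∇_r be dual to each other centered nef-partitions in ℝ^d, with Δ = Δ_1 + ⋯ + Δ_r and Δ* = {y ∈ ℝ^d : ⟨x,y⟩ ≥ −1 for all x ∈ Δ}. For a nonempty subset I ⊆ {1, …, r} set Δ^I := Σ_{i∈I} Δ_i (Minkowski sum) and ∇_I := Conv(∪_{i∈I} ∇_i). Then Δ^I = {x ∈ Δ : ⟨x,y⟩ ≥ 0 for all y ∈ ∇_j and all j ∉ I}, and ∇_I = {y ∈ Δ* : ⟨x,y⟩ ≥ 0 for all x ∈ Δ_j and all j ∉ I}. -/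

import Mathlib

open Pointwise

noncomputable section

/-- A point of `ℝ^n` all of whose coordinates are integers (a lattice point of `ℤ^n`). -/
def IsLatticePt {n : ℕ} (x : Fin n → ℝ) : Prop := ∀ k, ∃ m : ℤ, x k = (m : ℝ)

/-- A lattice polytope: the convex hull of finitely many lattice points. -/
def IsLatticePoly {n : ℕ} (P : Set (Fin n → ℝ)) : Prop :=
  ∃ V : Finset (Fin n → ℝ), V.Nonempty ∧ (∀ v ∈ V, IsLatticePt v) ∧
    P = convexHull ℝ (V : Set (Fin n → ℝ))

/-- The standard inner product pairing on `ℝ^n`. -/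
def pairR {n : ℕ} (x y : Fin n → ℝ) : ℝ := ∑ k, x k * y k

/-- The dual polytope `P* = {y : ⟨x,y⟩ ≥ -1 ∀ x ∈ P}`. -/
def dualPoly {n : ℕ} (P : Set (Fin n → ℝ)) : Set (Fin n → ℝ) :=
  {y | ∀ x ∈ P, -1 ≤ pairR x y}

/-- A reflexive polytope: a lattice polytope with `0` in its interior whose dual
polytope is again a lattice polytope. -/
def IsReflexivePoly {n : ℕ} (P : Set (Fin n → ℝ)) : Prop :=
  IsLatticePoly P ∧ (0 : Fin n → ℝ) ∈ interior P ∧ IsLatticePoly (dualPoly P)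

/-- The dimension of a polytope: the dimension of the direction of its affine span. -/
def polyDim {n : ℕ} (P : Set (Fin n → ℝ)) : ℕ :=
  Module.finrank ℝ (affineSpan ℝ P).direction

/-- A (full-dimensional) Gorenstein polytope of index `r`: `rP` has `m` as its unique
interior lattice point and `rP - m` is reflexive. -/
def IsGorensteinPoly {n : ℕ} (P : Set (Fin n → ℝ)) (r : ℕ) (m : Fin n → ℝ) : Prop :=
  IsLatticePoly P ∧ IsLatticePt m ∧
  (∀ x, IsLatticePt x → (x ∈ interior ((r : ℝ) • P) ↔ x = m)) ∧
  IsReflexivePoly ((fun x => x - m) '' ((r : ℝ) • P))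

/-- `y` is a point of the lattice dual to the (saturated) lattice `ℤ^n ∩ W` inside `W`. -/
def IsDualLatticePt {n : ℕ} (W : Submodule ℝ (Fin n → ℝ)) (y : Fin n → ℝ) : Prop :=
  y ∈ W ∧ ∀ x ∈ W, IsLatticePt x → ∃ m : ℤ, pairR x y = (m : ℝ)

/-- Reflexivity of a (possibly lower-dimensional) lattice polytope inside its linear
span: `0` is in the relative interior and the dual polytope taken inside the linear
span is a lattice polytope with respect to the dual lattice. -/
def IsReflexiveIn {n : ℕ} (P : Set (Fin n → ℝ)) : Prop :=
  IsLatticePoly P ∧ (0 : Fin n → ℝ) ∈ intrinsicInterior ℝ P ∧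
  ∃ V : Finset (Fin n → ℝ), V.Nonempty ∧
    (∀ v ∈ V, IsDualLatticePt (Submodule.span ℝ P) v) ∧
    {y | y ∈ Submodule.span ℝ P ∧ ∀ x ∈ P, -1 ≤ pairR x y} =
      convexHull ℝ (V : Set (Fin n → ℝ))

/-- Gorenstein polytope of index `r` (possibly lower-dimensional): `rP` has `m` as its
unique relative-interior lattice point and `rP - m` is reflexive within its span. -/
def IsGorensteinIn {n : ℕ} (P : Set (Fin n → ℝ)) (r : ℕ) (m : Fin n → ℝ) : Prop :=
  IsLatticePoly P ∧ IsLatticePt m ∧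
  (∀ x, IsLatticePt x → (x ∈ intrinsicInterior ℝ ((r : ℝ) • P) ↔ x = m)) ∧
  IsReflexiveIn ((fun x => x - m) '' ((r : ℝ) • P))

/-- The Minkowski sum `Δ 0 + ⋯ + Δ (r-1)` of a family of sets. -/
def minkSum {n r : ℕ} (Δ : Fin r → Set (Fin n → ℝ)) : Set (Fin n → ℝ) :=
  {x | ∃ f : Fin r → (Fin n → ℝ), (∀ i, f i ∈ Δ i) ∧ x = ∑ i, f i}

/-- The Minkowski sum `Σ_{i ∈ I} Δ i`. -/
def minkSumOver {n r : ℕ} (I : Finset (Fin r)) (Δ : Fin r → Set (Fin n → ℝ)) :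
    Set (Fin n → ℝ) :=
  {x | ∃ f : Fin r → (Fin n → ℝ), (∀ i ∈ I, f i ∈ Δ i) ∧ x = ∑ i ∈ I, f i}

/-- The point `x × e_i ∈ ℝ^d × ℝ^r`. -/
def cayleyPt {d r : ℕ} (x : Fin d → ℝ) (i : Fin r) : Fin (d + r) → ℝ :=
  Fin.append x (fun j => if j = i then 1 else 0)

/-- The Cayley polytope `Δ 0 * ⋯ * Δ (r-1) ⊂ ℝ^d × ℝ^r`. -/
def cayley {d r : ℕ} (Δ : Fin r → Set (Fin d → ℝ)) : Set (Fin (d + r) → ℝ) :=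
  convexHull ℝ (⋃ i, (fun x => cayleyPt x i) '' Δ i)

/-- `F` is a facet of `P`: a nonempty exposed face of dimension one less. -/
def IsFacetOf {n : ℕ} (F P : Set (Fin n → ℝ)) : Prop :=
  IsExposed ℝ P F ∧ F.Nonempty ∧ polyDim F + 1 = polyDim P

/-- A special `(r-1)`-simplex of `P`: `r` affinely independent lattice points of `P`
such that every facet of `P` contains exactly `r - 1` of them. -/
def IsSpecialSimplex {n : ℕ} (P : Set (Fin n → ℝ)) (r : ℕ) (v : Fin r → Fin n → ℝ) : Prop :=
  (∀ i, IsLatticePt (v i) ∧ v i ∈ P) ∧ AffineIndependent ℝ v ∧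
  ∀ F, IsFacetOf F P → ∃! i, v i ∉ F

/-- `∇_i = {y : ⟨x,y⟩ ≥ -δ_{ij} ∀ x ∈ Δ_j ∀ j}`, the polytopes of the dual nef-partition. -/
def nefDual {d r : ℕ} (Δ : Fin r → Set (Fin d → ℝ)) (i : Fin r) : Set (Fin d → ℝ) :=
  {y | ∀ j, ∀ x ∈ Δ j, -(if i = j then (1 : ℝ) else 0) ≤ pairR x y}

/-- A centered nef-partition: lattice polytopes containing `0` whose Minkowski sum is a
reflexive polytope with `0` as its unique interior lattice point. -/
def IsCenteredNefPartition {d r : ℕ} (Δ : Fin r → Set (Fin d → ℝ)) : Prop :=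
  (∀ i, IsLatticePoly (Δ i) ∧ (0 : Fin d → ℝ) ∈ Δ i) ∧
  IsReflexivePoly (minkSum Δ) ∧
  ∀ x, IsLatticePt x → x ∈ interior (minkSum Δ) → x = 0

/-- Two centered nef-partitions dual to each other. -/
def AreDualNefPartitions {d r : ℕ} (Δ Nb : Fin r → Set (Fin d → ℝ)) : Prop :=
  IsCenteredNefPartition Δ ∧ IsCenteredNefPartition Nb ∧
  (∀ i, Nb i = nefDual Δ i) ∧ (∀ i, Δ i = nefDual Nb i)

/-- A Gorenstein cone with its distinguished lattice point `nσ`: a full-dimensional cone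
generated by finitely many lattice points on the hyperplane `⟨·, nσ⟩ = 1`. -/
def IsGorensteinCone {n : ℕ} (σ : Set (Fin n → ℝ)) (nσ : Fin n → ℝ) : Prop :=
  IsLatticePt nσ ∧ Submodule.span ℝ σ = ⊤ ∧
  ∃ V : Finset (Fin n → ℝ), V.Nonempty ∧
    (∀ v ∈ V, IsLatticePt v ∧ pairR v nσ = 1) ∧
    σ = {x | ∃ c : (Fin n → ℝ) → ℝ, (∀ v, 0 ≤ c v) ∧ x = ∑ v ∈ V, c v • v}

/-- The dual cone. -/
def dualCone {n : ℕ} (σ : Set (Fin n → ℝ)) : Set (Fin n → ℝ) :=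
  {y | ∀ x ∈ σ, 0 ≤ pairR x y}

/-- Integrally closed lattice polytope: every lattice point of `k • P` is a sum of `k`
lattice points of `P`. -/
def IntegrallyClosed {n : ℕ} (P : Set (Fin n → ℝ)) : Prop :=
  ∀ (k : ℕ) (x : Fin n → ℝ), IsLatticePt x → x ∈ (k : ℝ) • P →
    ∃ v : Fin k → (Fin n → ℝ), (∀ j, IsLatticePt (v j) ∧ v j ∈ P) ∧ x = ∑ j, v j


/-! ### Auxiliary lemmas -/

section Aux

lemma pairR_comm {n : ℕ} (x y : Fin n → ℝ) : pairR x y = pairR y x := by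
  unfold pairR; exact Finset.sum_congr rfl fun k _ => mul_comm _ _

lemma pairR_zero_left {n : ℕ} (y : Fin n → ℝ) : pairR 0 y = 0 := by
  unfold pairR; simp

lemma pairR_zero_right {n : ℕ} (x : Fin n → ℝ) : pairR x 0 = 0 := by
  unfold pairR; simp

lemma isLinearMap_pairR {n : ℕ} (y : Fin n → ℝ) :
    IsLinearMap ℝ (fun x : Fin n → ℝ => pairR x y) := by
  constructor
  · intro a b; unfold pairR
    simp [add_mul, Finset.sum_add_distrib]
  · intro c a; unfold pairR
    simp [Finset.mul_sum, mul_assoc]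

lemma pairR_smul_left {n : ℕ} (c : ℝ) (x y : Fin n → ℝ) :
    pairR (c • x) y = c * pairR x y := (isLinearMap_pairR y).2 c x

lemma pairR_add_left {n : ℕ} (x x' y : Fin n → ℝ) :
    pairR (x + x') y = pairR x y + pairR x' y := (isLinearMap_pairR y).1 x x'

lemma pairR_sum_left {n : ℕ} {ι : Type*} (s : Finset ι) (f : ι → (Fin n → ℝ))
    (y : Fin n → ℝ) : pairR (∑ i ∈ s, f i) y = ∑ i ∈ s, pairR (f i) y := by
  classical
  induction s using Finset.induction_on with
  | empty => simp [pairR_zero_left]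
  | insert _ _ hnot ih =>
      rw [Finset.sum_insert hnot, Finset.sum_insert hnot, pairR_add_left, ih]

lemma pairR_smul_right {n : ℕ} (c : ℝ) (x y : Fin n → ℝ) :
    pairR x (c • y) = c * pairR x y := by
  rw [pairR_comm, pairR_smul_left, pairR_comm]

lemma pairR_sum_right {n : ℕ} {ι : Type*} (s : Finset ι) (f : ι → (Fin n → ℝ))
    (x : Fin n → ℝ) : pairR x (∑ i ∈ s, f i) = ∑ i ∈ s, pairR x (f i) := by
  rw [pairR_comm, pairR_sum_left]
  exact Finset.sum_congr rfl fun i _ => pairR_comm _ _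

lemma pairR_self_pos {n : ℕ} {y : Fin n → ℝ} (hy : y ≠ 0) : 0 < pairR y y := by
  unfold pairR
  have hnn : ∀ k ∈ Finset.univ, (0:ℝ) ≤ y k * y k := fun k _ => mul_self_nonneg _
  rcases (Finset.sum_nonneg hnn).lt_or_eq with h | h
  · exact h
  · exfalso
    apply hy
    funext k
    have := (Finset.sum_eq_zero_iff_of_nonneg hnn).mp h.symm k (Finset.mem_univ k)
    simpa using mul_self_eq_zero.mp this

lemma pairR_int {n : ℕ} {x y : Fin n → ℝ} (hx : IsLatticePt x) (hy : IsLatticePt y) :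
    ∃ m : ℤ, pairR x y = (m : ℝ) := by
  choose a ha using hx
  choose b hb using hy
  refine ⟨∑ k, a k * b k, ?_⟩
  unfold pairR
  push_cast
  exact Finset.sum_congr rfl fun k _ => by rw [ha k, hb k]

lemma zero_mem_nefDual {d r : ℕ} (Δ : Fin r → Set (Fin d → ℝ)) (k : Fin r) :
    (0 : Fin d → ℝ) ∈ nefDual Δ k := by
  intro j x hx
  rw [pairR_zero_right]
  split_ifs <;> norm_num

lemma convex_nefDual {d r : ℕ} (Δ : Fin r → Set (Fin d → ℝ)) (k : Fin r) :
    Convex ℝ (nefDual Δ k) := by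
  intro y₁ h₁ y₂ h₂ a b ha hb hab
  intro j x hx
  have e : pairR x (a • y₁ + b • y₂) = a * pairR x y₁ + b * pairR x y₂ := by
    rw [pairR_comm, pairR_add_left, pairR_smul_left, pairR_smul_left,
      pairR_comm y₁ x, pairR_comm y₂ x]
  rw [e]
  have h1 := h₁ j x hx
  have h2 := h₂ j x hx
  calc -(if k = j then (1:ℝ) else 0) = a * -(if k = j then (1:ℝ) else 0)
        + b * -(if k = j then (1:ℝ) else 0) := by rw [← add_mul, hab, one_mul]
    _ ≤ a * pairR x y₁ + b * pairR x y₂ := by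
        have := mul_le_mul_of_nonneg_left h1 ha
        have := mul_le_mul_of_nonneg_left h2 hb
        linarith

lemma zero_mem_minkSum {d r : ℕ} {Δ : Fin r → Set (Fin d → ℝ)}
    (h : ∀ k, (0 : Fin d → ℝ) ∈ Δ k) : (0 : Fin d → ℝ) ∈ minkSum Δ :=
  ⟨0, fun k => h k, by simp⟩

end Aux

/-- **Master decomposition lemma** (the heart of nef-partition duality): every `y`
decomposes as `∑ k, t k • z k` with `z k ∈ nefDual Δ k` and `t k` the support values. -/
lemma nef_master {d r : ℕ} (Δ : Fin r → Set (Fin d → ℝ))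
    (hΔ : IsCenteredNefPartition Δ) (i₀ : Fin r) (y : Fin d → ℝ) :
    ∃ (t : Fin r → ℝ) (z : Fin r → (Fin d → ℝ)),
      (∀ k, 0 ≤ t k) ∧ (∀ k, z k ∈ nefDual Δ k) ∧ (y = ∑ k, t k • z k) ∧
      (∀ k (c : ℝ), (∀ x ∈ Δ k, -c ≤ pairR x y) → t k ≤ c) ∧
      (∀ c : ℝ, (∀ x ∈ minkSum Δ, -c ≤ pairR x y) → ∑ k, t k ≤ c) := by
  classical
  obtain ⟨hpoly, hrefl, _hunique⟩ := hΔ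
  have h0mem : ∀ k, (0 : Fin d → ℝ) ∈ Δ k := fun k => (hpoly k).2
  choose V hVne hVlat hVeq using fun k => (hpoly k).1
  have hVsub : ∀ k, (V k : Set (Fin d → ℝ)) ⊆ Δ k := fun k =>
    (hVeq k) ▸ subset_convexHull ℝ _
  set φ : Fin r → (Fin d → ℝ) → ℝ :=
    fun k w => (V k).sup' (hVne k) (fun v => -(pairR v w)) with hφdef
  -- (A) lower bound on the whole polytope
  have hA : ∀ (k : Fin r) (w : Fin d → ℝ), ∀ x ∈ Δ k, -(φ k w) ≤ pairR x w := by
    intro k w x hx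
    rw [hVeq k] at hx
    have hsub : (V k : Set (Fin d → ℝ)) ⊆ {x | -(φ k w) ≤ pairR x w} := by
      intro v hv
      have hle : -(pairR v w) ≤ φ k w :=
        Finset.le_sup' (fun v => -(pairR v w)) (by exact_mod_cast hv)
      simp only [Set.mem_setOf_eq]; linarith
    exact convexHull_min hsub (convex_halfSpace_ge (isLinearMap_pairR w) _) hx
  -- (B) attainment at a vertex
  have hB : ∀ (k : Fin r) (w : Fin d → ℝ), ∃ v ∈ V k, φ k w = -(pairR v w) := by
    intro k w
    obtain ⟨v, hv, hval⟩ := Finset.exists_mem_eq_sup' (hVne k) (fun v => -(pairR v w))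
    exact ⟨v, hv, hval⟩
  -- (C) nonnegativity
  have hC : ∀ (k : Fin r) (w : Fin d → ℝ), 0 ≤ φ k w := by
    intro k w
    have := hA k w 0 (h0mem k)
    rw [pairR_zero_left] at this; linarith
  -- (D) minimality
  have hD : ∀ (k : Fin r) (w : Fin d → ℝ) (c : ℝ),
      (∀ x ∈ Δ k, -c ≤ pairR x w) → φ k w ≤ c := by
    intro k w c hc
    obtain ⟨v, hv, hval⟩ := hB k w
    have := hc v (hVsub k hv)
    rw [hval]; linarith
  -- (A') lower bound for the Minkowski sum
  have hA' : ∀ (w : Fin d → ℝ), ∀ x ∈ minkSum Δ, -(∑ k, φ k w) ≤ pairR x w := by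
    intro w x hx
    obtain ⟨f, hf, rfl⟩ := hx
    rw [pairR_sum_left, ← Finset.sum_neg_distrib]
    exact Finset.sum_le_sum fun k _ => hA k w (f k) (hf k)
  -- (E) attainment for the Minkowski sum
  have hE : ∀ (w : Fin d → ℝ), ∃ x ∈ minkSum Δ, pairR x w = -(∑ k, φ k w) := by
    intro w
    choose v hvV hveq using fun k => hB k w
    refine ⟨∑ k, v k, ⟨v, fun k => hVsub k (hvV k), rfl⟩, ?_⟩
    rw [pairR_sum_left, ← Finset.sum_neg_distrib]
    exact Finset.sum_congr rfl fun k _ => by rw [hveq k]; ring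
  -- (F) minimality for the sum
  have hF : ∀ (w : Fin d → ℝ) (c : ℝ),
      (∀ x ∈ minkSum Δ, -c ≤ pairR x w) → ∑ k, φ k w ≤ c := by
    intro w c hc
    obtain ⟨x, hx, hval⟩ := hE w
    have := hc x hx
    rw [hval] at this; linarith
  obtain ⟨_, hint, hduallat⟩ := hrefl
  obtain ⟨W, hWne, hWlat, hWeq⟩ := hduallat
  -- (G) support sum at most 1 on the dual polytope
  have hG : ∀ w ∈ dualPoly (minkSum Δ), ∑ k, φ k w ≤ 1 := fun w hw => hF w 1 hw
  -- (KEY) every generator of the dual polytope lies in one `nefDual Δ k`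
  have hKEY : ∀ η ∈ W, ∃ k₀, η ∈ nefDual Δ k₀ ∧
      ∀ k, φ k η = if k = k₀ then ∑ j, φ j η else 0 := by
    intro η hη
    have hηlat : IsLatticePt η := hWlat η hη
    have hηdual : η ∈ dualPoly (minkSum Δ) := by
      rw [hWeq]; exact subset_convexHull ℝ _ (by exact_mod_cast hη)
    have hint' : ∀ k, ∃ m : ℤ, φ k η = (m : ℝ) := by
      intro k
      obtain ⟨v, hvV, hveq⟩ := hB k η
      obtain ⟨m, hm⟩ := pairR_int (hVlat k v hvV) hηlat
      exact ⟨-m, by rw [hveq, hm]; push_cast; ring⟩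
    choose m hm using hint'
    have hm0 : ∀ k, 0 ≤ m k := by
      intro k
      have := hC k η
      rw [hm k] at this; exact_mod_cast this
    have hmsum : ∑ k, m k ≤ 1 := by
      have h1 := hG η hηdual
      have h2 : ((∑ k, m k : ℤ) : ℝ) ≤ 1 := by
        push_cast
        calc (∑ k, (m k : ℝ)) = ∑ k, φ k η :=
              Finset.sum_congr rfl fun k _ => (hm k).symm
          _ ≤ 1 := h1
      exact_mod_cast h2
    by_cases hz : ∀ k, m k = 0
    · refine ⟨i₀, ?_, ?_⟩
      · intro j x hx
        have h1 := hA j η x hx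
        rw [hm j, hz j] at h1
        have h2 : (0:ℝ) ≤ pairR x η := by simpa using h1
        have h3 : -(if i₀ = j then (1:ℝ) else 0) ≤ 0 := by split_ifs <;> norm_num
        linarith
      · intro k
        have hall : ∑ j, φ j η = 0 := by
          rw [Finset.sum_eq_zero]
          intro j _
          rw [hm j, hz j]; norm_num
        rw [hm k, hz k, hall]
        split_ifs <;> norm_num
    · push_neg at hz
      obtain ⟨k₀, hk₀⟩ := hz
      have h1le : 1 ≤ m k₀ := by
        rcases (hm0 k₀).lt_or_eq with h | h
        · omega
        · exact absurd h.symm hk₀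
      have hsplit : ∑ j, m j = m k₀ + ∑ j ∈ Finset.univ.erase k₀, m j :=
        (Finset.add_sum_erase _ _ (Finset.mem_univ k₀)).symm
      have hrestnn : (0:ℤ) ≤ ∑ j ∈ Finset.univ.erase k₀, m j :=
        Finset.sum_nonneg fun j _ => hm0 j
      have hrest0 : ∑ j ∈ Finset.univ.erase k₀, m j = 0 := by omega
      have hrest : ∀ k, k ≠ k₀ → m k = 0 := by
        intro k hk
        exact (Finset.sum_eq_zero_iff_of_nonneg (fun j _ => hm0 j)).mp hrest0 k
          (Finset.mem_erase.mpr ⟨hk, Finset.mem_univ k⟩)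
      have hk₀1 : m k₀ = 1 := by omega
      have hsumφ : ∑ j, φ j η = 1 := by
        calc ∑ j, φ j η = ∑ j, (m j : ℝ) := Finset.sum_congr rfl fun j _ => hm j
          _ = ((∑ j, m j : ℤ) : ℝ) := by push_cast; ring
          _ = 1 := by rw [hsplit, hrest0, hk₀1]; norm_num
      refine ⟨k₀, ?_, ?_⟩
      · intro j x hx
        have h1 := hA j η x hx
        by_cases hj : j = k₀
        · subst hj
          rw [hm j, hk₀1] at h1
          push_cast at h1
          simpa using h1
        · rw [hm j, hrest j hj] at h1
          have h2 : (0:ℝ) ≤ pairR x η := by simpa using h1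
          have h3 : -(if k₀ = j then (1:ℝ) else 0) ≤ 0 := by split_ifs <;> norm_num
          linarith
      · intro k
        rw [hsumφ, hm k]
        by_cases hk : k = k₀
        · subst hk; rw [hk₀1]; simp
        · rw [hrest k hk]; simp [hk]
  -- main construction
  by_cases hy0 : y = 0
  · subst hy0
    refine ⟨fun _ => 0, fun _ => 0, fun k => le_rfl, fun k => zero_mem_nefDual Δ k,
      by simp, ?_, ?_⟩
    · intro k c hc
      have := hc 0 (h0mem k)
      rw [pairR_zero_right] at this
      show (0:ℝ) ≤ c
      linarith
    · intro c hc
      have := hc 0 (zero_mem_minkSum h0mem)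
      rw [pairR_zero_right] at this
      simpa using this
  · set c : ℝ := ∑ k, φ k y with hc_def
    have hcpos : 0 < c := by
      obtain ⟨ε, hε, hball⟩ := Metric.mem_nhds_iff.mp (mem_interior_iff_mem_nhds.mp hint)
      set δ : ℝ := ε / (2 * (‖y‖ + 1)) with hδ
      have hypos : (0:ℝ) < ‖y‖ + 1 := by positivity
      have hδpos : 0 < δ := by positivity
      have hmem2 : (-δ) • y ∈ minkSum Δ := by
        apply hball
        rw [Metric.mem_ball, dist_zero_right, norm_smul]
        have hnδ : ‖(-δ:ℝ)‖ = δ := by rw [norm_neg, Real.norm_of_nonneg hδpos.le]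
        rw [hnδ]
        have he : δ * (‖y‖ + 1) = ε / 2 := by
          rw [hδ]; field_simp
        nlinarith [norm_nonneg y]
      have h1 := hA' y _ hmem2
      rw [pairR_smul_left] at h1
      have h2 := pairR_self_pos hy0
      nlinarith [mul_pos hδpos h2]
    have hw₀ : c⁻¹ • y ∈ dualPoly (minkSum Δ) := by
      intro x hx
      have h1 := hA' y x hx
      have h2 : pairR x (c⁻¹ • y) = c⁻¹ * pairR x y := pairR_smul_right _ _ _
      have h3 : c⁻¹ * (-c) ≤ c⁻¹ * pairR x y :=
        mul_le_mul_of_nonneg_left h1 (inv_nonneg.mpr hcpos.le)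
      have h4 : c⁻¹ * (-c) = -1 := by field_simp
      rw [h2]; linarith
    rw [hWeq, Finset.convexHull_eq] at hw₀
    obtain ⟨wt, hwt0, hwt1, hwtc⟩ := hw₀
    rw [Finset.centerMass_eq_of_sum_1 W id hwt1] at hwtc
    have hyrep : y = ∑ η ∈ W, (c * wt η) • η := by
      calc y = c • (c⁻¹ • y) := by rw [smul_smul, mul_inv_cancel₀ hcpos.ne', one_smul]
        _ = c • ∑ η ∈ W, wt η • id η := by rw [hwtc]
        _ = ∑ η ∈ W, (c * wt η) • η := by
            rw [Finset.smul_sum]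
            exact Finset.sum_congr rfl fun η _ => by rw [smul_smul]; rfl
    have : Nonempty (Fin r) := ⟨i₀⟩
    choose! g hg1 hg2 using hKEY
    set S : Fin r → ℝ := fun k => ∑ η ∈ W.filter (fun η => g η = k), c * wt η with hS
    have hwnn : ∀ η ∈ W, 0 ≤ c * wt η := fun η hη => mul_nonneg hcpos.le (hwt0 η hη)
    have hSnn : ∀ k, 0 ≤ S k := fun k =>
      Finset.sum_nonneg fun η hη => hwnn η (Finset.mem_of_mem_filter _ hη)
    have hSsum : ∑ k, S k = c := by
      rw [hS]
      rw [Finset.sum_fiberwise W g (fun η => c * wt η), ← Finset.mul_sum, hwt1, mul_one]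
    have hφle : ∀ k, φ k y ≤ S k := by
      intro k
      obtain ⟨v, hvV, hveq⟩ := hB k y
      have hvexp : pairR v y = ∑ η ∈ W, (c * wt η) * pairR v η := by
        conv_lhs => rw [hyrep]
        rw [pairR_sum_right]
        exact Finset.sum_congr rfl fun η _ => pairR_smul_right _ _ _
      have hstep : ∀ η ∈ W, -((c * wt η) * pairR v η) ≤
          (if g η = k then c * wt η else 0) := by
        intro η hη
        have hb : -(pairR v η) ≤ φ k η := Finset.le_sup' (fun v => -(pairR v η)) hvV
        have h2 := hg2 η hη k
        by_cases hgη : g η = k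
        · rw [if_pos hgη]
          have hφη : φ k η ≤ 1 := by
            rw [h2, if_pos hgη.symm]
            exact hG η (by rw [hWeq]; exact subset_convexHull ℝ _ (by exact_mod_cast hη))
          calc -((c * wt η) * pairR v η) = (c * wt η) * (-(pairR v η)) := by ring
            _ ≤ (c * wt η) * 1 :=
                mul_le_mul_of_nonneg_left (le_trans hb hφη) (hwnn η hη)
            _ = c * wt η := mul_one _
        · rw [if_neg hgη]
          have hφη : φ k η = 0 := by
            rw [h2, if_neg (fun hkg => hgη hkg.symm)]
          have hb0 : -(pairR v η) ≤ 0 := hφη ▸ hb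
          calc -((c * wt η) * pairR v η) = (c * wt η) * (-(pairR v η)) := by ring
            _ ≤ (c * wt η) * 0 := mul_le_mul_of_nonneg_left hb0 (hwnn η hη)
            _ = 0 := mul_zero _
      calc φ k y = -(pairR v y) := hveq
        _ = ∑ η ∈ W, -((c * wt η) * pairR v η) := by
            rw [hvexp, Finset.sum_neg_distrib]
        _ ≤ ∑ η ∈ W, (if g η = k then c * wt η else 0) := Finset.sum_le_sum hstep
        _ = S k := (Finset.sum_filter _ _).symm
    have hφeq : ∀ k, φ k y = S k := by
      have hsums : ∑ k, φ k y = ∑ k, S k := by rw [hSsum]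
      intro k
      exact (Finset.sum_eq_sum_iff_of_le (fun i _ => hφle i)).mp hsums k (Finset.mem_univ k)
    set z : Fin r → (Fin d → ℝ) := fun k =>
      if h0 : S k = 0 then 0
      else (S k)⁻¹ • ∑ η ∈ W.filter (fun η => g η = k), (c * wt η) • η with hz
    have hzmem : ∀ k, z k ∈ nefDual Δ k := by
      intro k
      by_cases h0 : S k = 0
      · simp only [hz, dif_pos h0]; exact zero_mem_nefDual Δ k
      · simp only [hz, dif_neg h0]
        have hSpos : 0 < S k := (hSnn k).lt_of_ne (Ne.symm h0)
        have hmem := Finset.centerMass_mem_convexHull (W.filter (fun η => g η = k))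
          (fun η hη => hwnn η (Finset.mem_of_mem_filter _ hη)) hSpos
          (fun η hη => by
            have hηW := Finset.mem_of_mem_filter _ hη
            have hgk := (Finset.mem_filter.mp hη).2
            exact hgk ▸ hg1 η hηW)
        rw [(convex_nefDual Δ k).convexHull_eq] at hmem
        have hcm : (S k)⁻¹ • ∑ η ∈ W.filter (fun η => g η = k), (c * wt η) • η =
            (W.filter (fun η => g η = k)).centerMass (fun η => c * wt η) (fun η => η) := by
          simp only [Finset.centerMass, hS]
        rw [hcm]
        exact hmem
    have hsmul : ∀ k, φ k y • z k = ∑ η ∈ W.filter (fun η => g η = k), (c * wt η) • η := by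
      intro k
      rw [hφeq k]
      by_cases h0 : S k = 0
      · simp only [hz, dif_pos h0, smul_zero]
        refine (Finset.sum_eq_zero fun η hη => ?_).symm
        have := (Finset.sum_eq_zero_iff_of_nonneg
          (fun η hη => hwnn η (Finset.mem_of_mem_filter _ hη))).mp h0 η hη
        rw [this, zero_smul]
      · simp only [hz, dif_neg h0]
        rw [smul_inv_smul₀ h0]
    have hfinal : y = ∑ k, φ k y • z k := by
      calc y = ∑ η ∈ W, (c * wt η) • η := hyrep
        _ = ∑ k, ∑ η ∈ W.filter (fun η => g η = k), (c * wt η) • η :=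
            (Finset.sum_fiberwise W g fun η => (c * wt η) • η).symm
        _ = ∑ k, φ k y • z k := Finset.sum_congr rfl fun k _ => (hsmul k).symm
    exact ⟨fun k => φ k y, z, fun k => hC k y, hzmem, hfinal,
      fun k c' hc' => hD k y c' hc', fun c' hc' => hF y c' hc'⟩

lemma pairR_combo {n : ℕ} (a b : ℝ) (x y₁ y₂ : Fin n → ℝ) :
    pairR x (a • y₁ + b • y₂) = a * pairR x y₁ + b * pairR x y₂ := by
  rw [pairR_comm, pairR_add_left, pairR_smul_left, pairR_smul_left,
    pairR_comm y₁ x, pairR_comm y₂ x]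

/-- For dual centered nef-partitions and a nonempty `I ⊆ {1, …, r}`:
`Δ^I = {x ∈ Δ : ⟨x,y⟩ ≥ 0 ∀ y ∈ ∇_j, j ∉ I}` and
`∇_I = {y ∈ Δ* : ⟨x,y⟩ ≥ 0 ∀ x ∈ Δ_j, j ∉ I}`. -/
theorem nef_partition_support_description {d r : ℕ}
    (Δ Nb : Fin r → Set (Fin d → ℝ))
    (h : AreDualNefPartitions Δ Nb)
    (I : Finset (Fin r)) (hI : I.Nonempty) :
    minkSumOver I Δ =
      {x ∈ minkSum Δ | ∀ j ∉ I, ∀ y ∈ Nb j, 0 ≤ pairR x y} ∧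
    convexHull ℝ (⋃ i ∈ I, Nb i) =
      {y ∈ dualPoly (minkSum Δ) | ∀ j ∉ I, ∀ x ∈ Δ j, 0 ≤ pairR x y} := by
  classical
  obtain ⟨hΔnef, hNbnef, hNbeq, hΔeq⟩ := h
  obtain ⟨i₀, hi₀⟩ := hI
  have h0Δ : ∀ k, (0 : Fin d → ℝ) ∈ Δ k := fun k => (hΔnef.1 k).2
  have h0Nb : ∀ k, (0 : Fin d → ℝ) ∈ Nb k := fun k => (hNbnef.1 k).2
  have hNbdual : ∀ (k : Fin r) (z : Fin d → ℝ), z ∈ Nb k →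
      ∀ j, ∀ x ∈ Δ j, -(if k = j then (1:ℝ) else 0) ≤ pairR x z := by
    intro k z hz
    rw [hNbeq k] at hz
    exact hz
  -- every point of `Nb i` pairs to at least `-1` with every point of `Δ`
  have hkey1 : ∀ (i : Fin r) (z : Fin d → ℝ), z ∈ Nb i →
      ∀ x ∈ minkSum Δ, -1 ≤ pairR x z := by
    intro i z hz x hx
    obtain ⟨f, hf, rfl⟩ := hx
    rw [pairR_sum_left]
    calc (-1:ℝ) = ∑ k, -(if i = k then (1:ℝ) else 0) := by
          have he : ∀ k : Fin r, -(if i = k then (1:ℝ) else 0) =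
              (if i = k then (-1:ℝ) else 0) := fun k => by split_ifs <;> norm_num
          simp only [he]
          rw [Finset.sum_ite_eq]
          simp
      _ ≤ ∑ k, pairR (f k) z :=
          Finset.sum_le_sum fun k _ => hNbdual i z hz k (f k) (hf k)
  constructor
  · -- first equality
    ext x
    constructor
    · rintro ⟨f, hf, rfl⟩
      refine ⟨?_, ?_⟩
      · refine ⟨fun k => if k ∈ I then f k else 0, fun k => ?_, ?_⟩
        · by_cases hk : k ∈ I
          · simp only [if_pos hk]; exact hf k hk
          · simp only [if_neg hk]; exact h0Δ k
        · show ∑ i ∈ I, f i = ∑ i, (if i ∈ I then f i else 0)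
          calc ∑ i ∈ I, f i = ∑ i ∈ I, (if i ∈ I then f i else 0) :=
                Finset.sum_congr rfl fun k hk => by rw [if_pos hk]
            _ = ∑ i, (if i ∈ I then f i else 0) :=
                Finset.sum_subset (Finset.subset_univ I) (fun k _ hk => by rw [if_neg hk])
      · intro j hj z hz
        rw [pairR_sum_left]
        refine Finset.sum_nonneg fun i hi => ?_
        have h1 := hNbdual j z hz i (f i) (hf i hi)
        have hji : j ≠ i := fun hji => hj (hji ▸ hi)
        rw [if_neg hji, neg_zero] at h1
        exact h1
    · rintro ⟨hxΔ, hx0⟩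
      obtain ⟨t, u, ht0, humem, hxeq, hmin, -⟩ := nef_master Nb hNbnef i₀ x
      have humem' : ∀ k, u k ∈ Δ k := fun k => (hΔeq k) ▸ humem k
      have htI : ∀ j ∉ I, t j = 0 := by
        intro j hj
        refine le_antisymm ?_ (ht0 j)
        have := hmin j 0 (fun z hz => by
          rw [neg_zero, pairR_comm]; exact hx0 j hj z hz)
        linarith
      have ht1 : ∀ i, t i ≤ 1 := by
        intro i
        refine hmin i 1 fun z hz => ?_
        rw [pairR_comm]
        exact hkey1 i z hz x hxΔ
      refine ⟨fun k => t k • u k, fun i hi => ?_, ?_⟩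
      · have hconv : Convex ℝ (Δ i) := by
          obtain ⟨V, -, -, hVeq⟩ := (hΔnef.1 i).1
          rw [hVeq]; exact convex_convexHull ℝ _
        have h2 := hconv (humem' i) (h0Δ i) (ht0 i)
          (by linarith [ht1 i] : (0:ℝ) ≤ 1 - t i) (by ring)
        simpa using h2
      · rw [hxeq]
        exact (Finset.sum_subset (Finset.subset_univ I)
          (fun k _ hk => by rw [htI k hk, zero_smul])).symm
  · -- second equality
    ext y
    constructor
    · intro hy
      have hsub : (⋃ i ∈ I, Nb i) ⊆
          {y ∈ dualPoly (minkSum Δ) | ∀ j ∉ I, ∀ x ∈ Δ j, 0 ≤ pairR x y} := by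
        intro z hz
        obtain ⟨i, hi, hzi⟩ := Set.mem_iUnion₂.mp hz
        refine ⟨fun x hx => hkey1 i z hzi x hx, ?_⟩
        intro j hj x hx
        have h1 := hNbdual i z hzi j x hx
        have hij : i ≠ j := fun hij => hj (hij ▸ hi)
        rw [if_neg hij, neg_zero] at h1
        exact h1
      have hconv : Convex ℝ
          {y ∈ dualPoly (minkSum Δ) | ∀ j ∉ I, ∀ x ∈ Δ j, 0 ≤ pairR x y} := by
        intro y₁ h₁ y₂ h₂ a b ha hb hab
        refine ⟨fun x hx => ?_, fun j hj x hx => ?_⟩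
        · rw [pairR_combo]
          have e1 := h₁.1 x hx
          have e2 := h₂.1 x hx
          have f1 := mul_le_mul_of_nonneg_left e1 ha
          have f2 := mul_le_mul_of_nonneg_left e2 hb
          nlinarith
        · rw [pairR_combo]
          have f1 := mul_le_mul_of_nonneg_left (h₁.2 j hj x hx) ha
          have f2 := mul_le_mul_of_nonneg_left (h₂.2 j hj x hx) hb
          nlinarith
      exact convexHull_min hsub hconv hy
    · rintro ⟨hyd, hy0⟩
      obtain ⟨t, z, ht0, hzmem, hyeq, hmin, hsum⟩ := nef_master Δ hΔnef i₀ y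
      have hzNb : ∀ k, z k ∈ Nb k := fun k => (hNbeq k) ▸ hzmem k
      have htI : ∀ j ∉ I, t j = 0 := by
        intro j hj
        refine le_antisymm ?_ (ht0 j)
        have := hmin j 0 (fun x hx => by rw [neg_zero]; exact hy0 j hj x hx)
        linarith
      have hseq : ∑ i ∈ I, t i = ∑ k, t k :=
        Finset.sum_subset (Finset.subset_univ I) (fun k _ hk => htI k hk)
      have hs1 : ∑ i ∈ I, t i ≤ 1 := by
        rw [hseq]; exact hsum 1 hyd
      have hyI : y = ∑ i ∈ I, t i • z i := by
        rw [hyeq]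
        exact (Finset.sum_subset (Finset.subset_univ I)
          (fun k _ hk => by rw [htI k hk, zero_smul])).symm
      set s : ℝ := ∑ i ∈ I, t i with hs
      set w : Fin r → ℝ := fun i => t i + (if i = i₀ then 1 - s else 0) with hw
      set p : Fin r → (Fin d → ℝ) :=
        fun i => if i = i₀ then ((t i₀ / w i₀) • z i₀) else z i with hp
      have hsnn : 0 ≤ s := Finset.sum_nonneg fun i _ => ht0 i
      have hw0 : ∀ i ∈ I, 0 ≤ w i := by
        intro i _
        simp only [hw]
        split_ifs
        · have := ht0 i; linarith
        · simpa using ht0 i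
      have hwsum : ∑ i ∈ I, w i = 1 := by
        simp only [hw]
        rw [Finset.sum_add_distrib, Finset.sum_ite_eq' I i₀ (fun _ => 1 - s),
          if_pos hi₀, ← hs]
        ring
      have hwi₀ : w i₀ = t i₀ + (1 - s) := by simp [hw]
      have hti₀w : t i₀ ≤ w i₀ := by rw [hwi₀]; linarith
      have hNbconv : ∀ k, Convex ℝ (Nb k) := by
        intro k
        rw [hNbeq k]
        exact convex_nefDual Δ k
      have hpmem : ∀ i ∈ I, p i ∈ Nb i := by
        intro i hi
        simp only [hp]
        by_cases hii : i = i₀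
        · subst hii
          rw [if_pos rfl]
          by_cases hw0' : w i = 0
          · have : t i / w i = 0 := by
              rw [hw0', div_zero]
            rw [this, zero_smul]
            exact h0Nb i
          · have hwpos : 0 < w i := (hw0 i hi).lt_of_ne (Ne.symm hw0')
            have ha : 0 ≤ t i / w i := div_nonneg (ht0 i) hwpos.le
            have hb : t i / w i ≤ 1 := (div_le_one hwpos).mpr hti₀w
            have h2 := (hNbconv i) (hzNb i) (h0Nb i) ha
              (by linarith : (0:ℝ) ≤ 1 - t i / w i) (by ring)
            simpa using h2
        · rw [if_neg hii]
          exact hzNb i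
      have hrep : ∑ i ∈ I, w i • p i = y := by
        rw [hyI]
        refine Finset.sum_congr rfl fun i hi => ?_
        by_cases hii : i = i₀
        · subst hii
          have hpw : p i = (t i / w i) • z i := by simp only [hp, if_pos rfl]
          rw [hpw, smul_smul]
          by_cases hw0' : w i = 0
          · have h1 : (0:ℝ) ≤ 1 - s := by linarith
            have h3 : w i = t i + (1 - s) := by simp [hw]
            have hti : t i = 0 := by
              have h2 := ht0 i
              rw [h3] at hw0'
              linarith
            rw [hti, hw0']
            norm_num
          · congr 1
            rw [mul_comm, div_mul_cancel₀ _ hw0']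
        · have hpw : p i = z i := by simp only [hp, if_neg hii]
          have hww : w i = t i := by simp [hw, hii]
          rw [hpw, hww]
      have hcm : I.centerMass w p = y := by
        rw [Finset.centerMass_eq_of_sum_1 _ _ hwsum]
        exact hrep
      have hmem := Finset.centerMass_mem_convexHull I hw0
        (by rw [hwsum]; norm_num)
        (fun i hi => Set.mem_biUnion hi (hpmem i hi))
      rw [hcm] at hmem
      exact hmem

end
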